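/- Assume there exists P₁⁰ ∈ 𝔭₁ such that the only Z ∈ 𝔨 with ⁅f₁(Z), P₁⁰⁆ = 0 is Z = 0, and assume there exist K₀ ∈ 𝔨 and P₂ ∈ 𝔭₂ with ⁅f₂(K₀), P₂⁆ ≠ 0. If (x, y) satisfies the GO condition, then (1 − x)/x = c₂(y − 1)/(c₁ y). -/

import Mathlib

/-- Suppose there is `P₁⁰ ∈ 𝔭₁` whose centralizer in `𝔨` is trivial,
and suppose `⁅f₂(𝔨), 𝔭₂⁆ ≠ 0`.  If `(x, y)` satisfies the GO condition, then
`(1 − x)/x = c₂(y − 1)/(c₁ y)`. -/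
theorem statement4
    {k g1 g2 : Type*}
    [LieRing k] [LieAlgebra ℝ k] [Module.Finite ℝ k] [LieAlgebra.IsSemisimple ℝ k]
    [LieRing g1] [LieAlgebra ℝ g1] [Module.Finite ℝ g1] [LieAlgebra.IsSemisimple ℝ g1]
    [LieRing g2] [LieAlgebra ℝ g2] [Module.Finite ℝ g2] [LieAlgebra.IsSemisimple ℝ g2]
    (f1 : k →ₗ⁅ℝ⁆ g1) (f2 : k →ₗ⁅ℝ⁆ g2)
    (hf1 : Function.Injective f1) (hf2 : Function.Injective f2)
    (c1 c2 : ℝ) (hc1 : 0 < c1) (hc2 : 0 < c2)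
    (hB1 : ∀ Z W : k, killingForm ℝ k Z W = c1 * killingForm ℝ g1 (f1 Z) (f1 W))
    (hB2 : ∀ Z W : k, killingForm ℝ k Z W = c2 * killingForm ℝ g2 (f2 Z) (f2 W))
    (p1 : Submodule ℝ g1) (hp1 : ∀ P : g1, P ∈ p1 ↔ ∀ Z : k, killingForm ℝ g1 P (f1 Z) = 0)
    (p2 : Submodule ℝ g2) (hp2 : ∀ P : g2, P ∈ p2 ↔ ∀ Z : k, killingForm ℝ g2 P (f2 Z) = 0)
    (hsum1 : ∀ a : g1, ∃ Z : k, a - f1 Z ∈ p1)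
    (hsum2 : ∀ a : g2, ∃ Z : k, a - f2 Z ∈ p2)
    (hint1 : ∀ Z : k, f1 Z ∈ p1 → Z = 0)
    (hint2 : ∀ Z : k, f2 Z ∈ p2 → Z = 0)
    (hlie1 : ∀ Z : k, ∀ P ∈ p1, ⁅f1 Z, P⁆ ∈ p1)
    (hlie2 : ∀ Z : k, ∀ P ∈ p2, ⁅f2 Z, P⁆ ∈ p2)
    (x y : ℝ) (hx : 0 < x) (hy : 0 < y)
    (P10 : g1) (hP10 : P10 ∈ p1)
    (hreg : ∀ Z : k, ⁅f1 Z, P10⁆ = 0 → Z = 0)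
    (hne : ∃ (K0 : k), ∃ P2 ∈ p2, ⁅f2 K0, P2⁆ ≠ 0)
    (hGO : (∀ (K0 : k), ∀ P1 ∈ p1, ∀ P2 ∈ p2, ∃ Z W : k,
        ⁅f1 Z + (f1 K0 + P1), f1 K0 + x • P1⁆ = f1 W ∧
        ⁅f2 Z + (-(c2 / c1) • f2 K0 + P2), -(c2 / c1) • f2 K0 + y • P2⁆ = f2 W)) :
    (1 - x) / x = c2 * (y - 1) / (c1 * y) := by

  obtain ⟨K0, P2, hP2, hbr⟩ := hne
  obtain ⟨Z, W, eq1, eq2⟩ := hGO K0 P10 hP10 P2 hP2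
  have e1 : f1 ⁅Z, K0⁆ + (x • ⁅f1 Z, P10⁆ + (x - 1) • ⁅f1 K0, P10⁆) = f1 W := by
    rw [← eq1]
    have hs : ⁅P10, f1 K0⁆ = -⁅f1 K0, P10⁆ := (lie_skew _ _).symm
    simp only [add_lie, lie_add, lie_smul, lie_self, hs, ← LieHom.map_lie]
    module
  have hmem1 : x • ⁅f1 Z, P10⁆ + (x - 1) • ⁅f1 K0, P10⁆ ∈ p1 :=
    p1.add_mem (p1.smul_mem _ (hlie1 Z P10 hP10)) (p1.smul_mem _ (hlie1 K0 P10 hP10))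
  have hW1 : W = ⁅Z, K0⁆ := by
    have h : f1 (W - ⁅Z, K0⁆) ∈ p1 := by
      have h0 : f1 W - f1 ⁅Z, K0⁆ = x • ⁅f1 Z, P10⁆ + (x - 1) • ⁅f1 K0, P10⁆ := by
        rw [← e1]; abel
      rw [map_sub f1, h0]; exact hmem1
    exact sub_eq_zero.mp (hint1 _ h)
  have e1' : x • ⁅f1 Z, P10⁆ + (x - 1) • ⁅f1 K0, P10⁆ = 0 := by
    have h0 := e1
    rw [hW1] at h0
    have h2 : f1 ⁅Z, K0⁆ + (x • ⁅f1 Z, P10⁆ + (x - 1) • ⁅f1 K0, P10⁆) = f1 ⁅Z, K0⁆ + 0 := by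
      rw [add_zero]; exact h0
    exact add_left_cancel h2
  have hZ : x • Z = (1 - x) • K0 := by
    have h : ⁅f1 (x • Z + (x - 1) • K0), P10⁆ = 0 := by
      rw [map_add f1, map_smul f1, map_smul f1, add_lie, smul_lie, smul_lie]
      exact e1'
    have h3 : x • Z + (x - 1) • K0 = 0 := hreg _ h
    have h4 : x • Z = -((x - 1) • K0) := eq_neg_of_add_eq_zero_left h3
    rw [h4]; module
  have e2 : (-(c2 / c1)) • f2 ⁅Z, K0⁆ + (y • ⁅f2 Z, P2⁆ + (c2 / c1 - c2 / c1 * y) • ⁅f2 K0, P2⁆) = f2 W := by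
    rw [← eq2]
    have hs : ⁅P2, f2 K0⁆ = -⁅f2 K0, P2⁆ := (lie_skew _ _).symm
    have h00 : f2 ⁅K0, K0⁆ = 0 := by rw [lie_self, map_zero f2]
    simp only [add_lie, lie_add, lie_smul, smul_lie, lie_self, hs, lie_neg, neg_lie, ← LieHom.map_lie, h00, neg_smul, smul_neg, smul_smul, smul_zero]
    module
  have hmem2 : y • ⁅f2 Z, P2⁆ + (c2 / c1 - c2 / c1 * y) • ⁅f2 K0, P2⁆ ∈ p2 :=
    p2.add_mem (p2.smul_mem _ (hlie2 Z P2 hP2)) (p2.smul_mem _ (hlie2 K0 P2 hP2))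
  have hW2 : W = (-(c2 / c1)) • ⁅Z, K0⁆ := by
    have h : f2 (W - (-(c2 / c1)) • ⁅Z, K0⁆) ∈ p2 := by
      have h0 : f2 W - (-(c2 / c1)) • f2 ⁅Z, K0⁆ = y • ⁅f2 Z, P2⁆ + (c2 / c1 - c2 / c1 * y) • ⁅f2 K0, P2⁆ := by
        rw [← e2]; abel
      rw [map_sub f2, map_smul f2, h0]; exact hmem2
    exact sub_eq_zero.mp (hint2 _ h)
  have e2' : y • ⁅f2 Z, P2⁆ + (c2 / c1 - c2 / c1 * y) • ⁅f2 K0, P2⁆ = 0 := by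
    have h0 := e2
    rw [hW2, map_smul f2] at h0
    exact add_left_cancel (a := (-(c2 / c1)) • f2 ⁅Z, K0⁆)
      (by rw [add_zero]; exact h0)
  have hZb : x • ⁅f2 Z, P2⁆ = (1 - x) • ⁅f2 K0, P2⁆ := by
    have h0 : ⁅f2 (x • Z), P2⁆ = ⁅f2 ((1 - x) • K0), P2⁆ := by rw [hZ]
    rw [map_smul f2, map_smul f2, smul_lie, smul_lie] at h0
    exact h0
  have key : (y * (1 - x) + x * (c2 / c1 - c2 / c1 * y)) • ⁅f2 K0, P2⁆ = 0 := by
    have h0 := congrArg (fun v => x • v) e2'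
    simp only [smul_add, smul_smul, smul_zero] at h0
    rw [mul_comm x y, mul_smul, hZb, smul_smul] at h0
    rw [← h0]
    module
  have hcoef : y * (1 - x) + x * (c2 / c1 - c2 / c1 * y) = 0 := by
    rcases smul_eq_zero.mp key with h | h
    · exact h
    · exact absurd h hbr
  have hx' : x ≠ 0 := ne_of_gt hx
  have hy' : y ≠ 0 := ne_of_gt hy
  have hc1' : c1 ≠ 0 := ne_of_gt hc1
  field_simp at hcoef ⊢
  nlinarith [hcoef]
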